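/- (Additivity of the point-free integral.) Let Σ be an abstract σ-algebra with measure μ, and let f, g, h be nonnegative measurable functions on Σ such that h = f + g in the point-free sense: for every t ∈ ℝ≥0∞ there exists c : ℕ → Σ such that for each n, c n is a least upper bound of the countable set {f (Set.Iic q) ⊓ g (Set.Iic r) | q, r ∈ ℚ≥0 ∪ {∞} ⊆ ℝ≥0∞, q + r ≤ t + 1/(n+1)}, and h (Set.Iic t) is a greatest lower bound of Set.range c. Then ∫ h dμ = ∫ f dμ + ∫ g dμ. -/

import Mathlib

open scoped ENNReal NNReal NNRat

/-- A nonnegative measurable function on an abstract σ-algebra `A`: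
a morphism of abstract σ-algebras from the Borel σ-algebra of `[0,∞]` to `A`,
encoded as a map on sets constrained on Borel sets. -/
structure NNMeasFun (A : Type*) [BooleanAlgebra A] where
  toFun : Set ℝ≥0∞ → A
  map_empty : toFun ∅ = ⊥
  map_univ : toFun Set.univ = ⊤
  map_compl : ∀ s : Set ℝ≥0∞, MeasurableSet s → toFun sᶜ = (toFun s)ᶜ
  map_inter : ∀ s t : Set ℝ≥0∞, MeasurableSet s → MeasurableSet t →
    toFun (s ∩ t) = toFun s ⊓ toFun t
  map_iUnion : ∀ s : ℕ → Set ℝ≥0∞, (∀ n, MeasurableSet (s n)) →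
    IsLUB (Set.range fun n => toFun (s n)) (toFun (⋃ n, s n))

/-- Simple data on `A`: a pairwise disjoint finite family with supremum `⊤`,
together with values in `[0,∞]`. -/
structure SimpleData (A : Type*) [BooleanAlgebra A] where
  m : ℕ
  a : Fin m → A
  x : Fin m → ℝ≥0∞
  disjoint : ∀ i j, i ≠ j → a i ⊓ a j = ⊥
  sup_eq_top : Finset.univ.sup a = ⊤

open scoped Classical in
/-- The simple nonnegative measurable function induced by simple data. -/
noncomputable def SimpleData.toFun {A : Type*} [BooleanAlgebra A] (d : SimpleData A)
    (b : Set ℝ≥0∞) : A :=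
  (Finset.univ.filter fun i => d.x i ∈ b).sup d.a

/-- The point-free integral of `f` with respect to `μ`: the supremum of the
integrals of simple functions lying below `f`. -/
noncomputable def pfIntegral {A : Type*} [BooleanAlgebra A] (μ : A → ℝ≥0∞)
    (f : Set ℝ≥0∞ → A) : ℝ≥0∞ :=
  ⨆ (d : SimpleData A) (_ : ∀ t : ℝ≥0∞, f (Set.Iic t) ≤ d.toFun (Set.Iic t)),
    ∑ i, μ (d.a i) * d.x i


section Aux
open scoped Classical
section SD
variable {A : Type*} [BooleanAlgebra A]

lemma NNMeasFun.mono (f : NNMeasFun A) {s t : Set ℝ≥0∞} (hs : MeasurableSet s)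
    (ht : MeasurableSet t) (hst : s ⊆ t) : f.toFun s ≤ f.toFun t := by
  have : f.toFun (s ∩ t) = f.toFun s ⊓ f.toFun t := f.map_inter s t hs ht
  rw [Set.inter_eq_self_of_subset_left hst] at this
  rw [this]; exact inf_le_right

lemma NNMeasFun.iic_mono (f : NNMeasFun A) {t t' : ℝ≥0∞} (h : t ≤ t') :
    f.toFun (Set.Iic t) ≤ f.toFun (Set.Iic t') :=
  f.mono measurableSet_Iic measurableSet_Iic (Set.Iic_subset_Iic.mpr h)

lemma NNMeasFun.iic_top (f : NNMeasFun A) : f.toFun (Set.Iic ∞) = ⊤ := by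
  rw [Set.Iic_top, f.map_univ]

/-- Build simple data from a family indexed by an arbitrary fintype. -/
noncomputable def SimpleData.ofFintype {ι : Type*} [Fintype ι] (a : ι → A) (x : ι → ℝ≥0∞)
    (hd : ∀ i j, i ≠ j → a i ⊓ a j = ⊥) (htop : Finset.univ.sup a = ⊤) : SimpleData A where
  m := Fintype.card ι
  a := a ∘ (Fintype.equivFin ι).symm
  x := x ∘ (Fintype.equivFin ι).symm
  disjoint := fun i j hij => hd _ _ (fun hc => hij (by
    have := congrArg (Fintype.equivFin ι) hc; simpa using this))
  sup_eq_top := by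
    rw [← htop]
    apply le_antisymm
    · exact Finset.sup_le fun i _ => Finset.le_sup (f := a) (Finset.mem_univ _)
    · exact Finset.sup_le fun j _ => by
        have : a j = (a ∘ (Fintype.equivFin ι).symm) (Fintype.equivFin ι j) := by simp
        rw [this]
        exact Finset.le_sup (Finset.mem_univ _)

lemma SimpleData.toFun_ofFintype {ι : Type*} [Fintype ι] (a : ι → A) (x : ι → ℝ≥0∞)
    (hd : ∀ i j, i ≠ j → a i ⊓ a j = ⊥) (htop : Finset.univ.sup a = ⊤) (b : Set ℝ≥0∞) :
    (SimpleData.ofFintype a x hd htop).toFun b = (Finset.univ.filter fun j => x j ∈ b).sup a := by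
  unfold SimpleData.toFun SimpleData.ofFintype
  apply le_antisymm
  · refine Finset.sup_le fun i hi => ?_
    simp only [Finset.mem_filter, Finset.mem_univ, true_and] at hi
    exact Finset.le_sup (f := a) (Finset.mem_filter.mpr ⟨Finset.mem_univ _, hi⟩)
  · refine Finset.sup_le fun j hj => ?_
    simp only [Finset.mem_filter, Finset.mem_univ, true_and] at hj
    have : a j = (a ∘ (Fintype.equivFin ι).symm) (Fintype.equivFin ι j) := by simp
    rw [this]
    refine Finset.le_sup (Finset.mem_filter.mpr ⟨Finset.mem_univ _, ?_⟩)
    simpa using hj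

lemma SimpleData.integral_ofFintype {ι : Type*} [Fintype ι] (μ : A → ℝ≥0∞)
    (a : ι → A) (x : ι → ℝ≥0∞)
    (hd : ∀ i j, i ≠ j → a i ⊓ a j = ⊥) (htop : Finset.univ.sup a = ⊤) :
    ∑ i, μ ((SimpleData.ofFintype a x hd htop).a i) * (SimpleData.ofFintype a x hd htop).x i
      = ∑ j, μ (a j) * x j := by
  exact Equiv.sum_comp (Fintype.equivFin ι).symm fun j => μ (a j) * x j

/-- The "lies below f" condition, via complements. -/
lemma SimpleData.below_iff (d : SimpleData A) (f : NNMeasFun A) :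
    (∀ t : ℝ≥0∞, f.toFun (Set.Iic t) ≤ d.toFun (Set.Iic t)) ↔
      (∀ i t, t < d.x i → d.a i ≤ (f.toFun (Set.Iic t))ᶜ) := by
  constructor
  · intro hb i t hti
    have h1 : d.a i ⊓ f.toFun (Set.Iic t) ≤ d.a i ⊓ d.toFun (Set.Iic t) :=
      inf_le_inf_left _ (hb t)
    have h2 : d.a i ⊓ d.toFun (Set.Iic t) = ⊥ := by
      unfold SimpleData.toFun
      rw [Finset.sup_inf_distrib_left]
      refine (Finset.sup_eq_bot_iff _ _).mpr fun j hj => ?_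
      simp only [Finset.mem_filter, Finset.mem_univ, true_and, Set.mem_Iic] at hj
      exact d.disjoint i j (fun hc => absurd (hc ▸ hj) (not_le.mpr hti))
    rw [h2, le_bot_iff] at h1
    exact le_compl_iff_disjoint_right.mpr (disjoint_iff.mpr h1)
  · intro hb t
    have htop : d.toFun (Set.Iic t) ⊔ (Finset.univ.filter fun i => ¬ d.x i ∈ Set.Iic t).sup d.a = ⊤ := by
      unfold SimpleData.toFun
      rw [← Finset.sup_union, Finset.filter_union_filter_not_eq, d.sup_eq_top]
    have hcompl : f.toFun (Set.Iic t) ⊓ (Finset.univ.filter fun i => ¬ d.x i ∈ Set.Iic t).sup d.a = ⊥ := by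
      rw [Finset.sup_inf_distrib_left]
      refine (Finset.sup_eq_bot_iff _ _).mpr fun j hj => ?_
      simp only [Finset.mem_filter, Finset.mem_univ, true_and, Set.mem_Iic, not_le] at hj
      have := hb j t hj
      rw [inf_comm]
      exact disjoint_iff.mp (le_compl_iff_disjoint_right.mp this)
    calc f.toFun (Set.Iic t)
        = f.toFun (Set.Iic t) ⊓ (d.toFun (Set.Iic t) ⊔ _) := by rw [htop, inf_top_eq]
      _ = (f.toFun (Set.Iic t) ⊓ d.toFun (Set.Iic t)) ⊔ (f.toFun (Set.Iic t) ⊓ _) := inf_sup_left _ _ _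
      _ ≤ d.toFun (Set.Iic t) ⊔ ⊥ := by rw [hcompl]; exact sup_le_sup inf_le_right le_rfl
      _ = d.toFun (Set.Iic t) := sup_bot_eq _

end SD


section Infra
variable {A : Type*} [BooleanAlgebra A]

/-- Distributivity of meet over existing countable suprema in a Boolean algebra. -/
lemma isLUB_inf_of_isLUB (a : A) {b : ℕ → A} {s : A} (hs : IsLUB (Set.range b) s) :
    IsLUB (Set.range fun n => a ⊓ b n) (a ⊓ s) := by
  constructor
  · rintro z ⟨n, rfl⟩
    exact inf_le_inf_left a (hs.1 ⟨n, rfl⟩)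
  · rintro u hu
    have h1 : ∀ n, b n ≤ u ⊔ aᶜ := by
      intro n
      have hn : a ⊓ b n ≤ u := hu ⟨n, rfl⟩
      calc b n = (b n ⊓ a) ⊔ (b n ⊓ aᶜ) := by
                rw [← inf_sup_left, sup_compl_eq_top, inf_top_eq]
        _ ≤ u ⊔ aᶜ := sup_le_sup (by rwa [inf_comm]) inf_le_right
    have h2 : s ≤ u ⊔ aᶜ := hs.2 (by rintro z ⟨n, rfl⟩; exact h1 n)
    calc a ⊓ s ≤ a ⊓ (u ⊔ aᶜ) := inf_le_inf_left a h2
      _ = (a ⊓ u) ⊔ (a ⊓ aᶜ) := inf_sup_left _ _ _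
      _ ≤ u := by rw [inf_compl_eq_bot]; exact sup_le inf_le_right bot_le

lemma isLUB_compl_of_isGLB {c : ℕ → A} {s : A} (hs : IsGLB (Set.range c) s) :
    IsLUB (Set.range fun n => (c n)ᶜ) sᶜ := by
  constructor
  · rintro z ⟨n, rfl⟩
    exact compl_le_compl (hs.1 ⟨n, rfl⟩)
  · rintro u hu
    have : uᶜ ≤ s := hs.2 (by
      rintro z ⟨n, rfl⟩
      have := hu ⟨n, rfl⟩
      exact compl_le_of_compl_le (by simpa using this))
    exact compl_le_of_compl_le (by simpa using this)

end Infra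


section Meas
variable {A : Type*} [BooleanAlgebra A] {μ : A → ℝ≥0∞}

/-- Finite additivity from countable additivity. -/
lemma meas_sup_eq_sum {ι : Type*} [Fintype ι]
    (h0 : μ ⊥ = 0)
    (hμ : ∀ a : ℕ → A, (∀ i j, i ≠ j → a i ⊓ a j = ⊥) →
      ∀ s, IsLUB (Set.range a) s → μ s = ∑' n, μ (a n))
    (a : ι → A) (hd : ∀ i j, i ≠ j → a i ⊓ a j = ⊥) :
    μ (Finset.univ.sup a) = ∑ i, μ (a i) := by
  classical
  set e := Fintype.equivFin ι with he
  set c : ℕ → A := fun n => if h : n < Fintype.card ι then a (e.symm ⟨n, h⟩) else ⊥ with hc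
  have hcd : ∀ i j, i ≠ j → c i ⊓ c j = ⊥ := by
    intro i j hij
    by_cases hi : i < Fintype.card ι <;> by_cases hj : j < Fintype.card ι <;>
      simp only [hc, hi, hj, dif_pos, dif_neg, not_false_iff, inf_bot_eq, bot_inf_eq]
    exact hd _ _ (by simp [Fin.ext_iff, hij])
  have hlub : IsLUB (Set.range c) (Finset.univ.sup a) := by
    constructor
    · rintro z ⟨n, rfl⟩
      by_cases hn : n < Fintype.card ι
      · simp only [hc, dif_pos hn]
        exact Finset.le_sup (Finset.mem_univ _)
      · simp [hc, dif_neg hn]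
    · intro u hu
      refine Finset.sup_le fun i _ => ?_
      have hmem : c (e i : ℕ) = a i := by simp [hc, (e i).isLt]
      have := hu ⟨(e i : ℕ), hmem⟩
      exact this
  rw [hμ c hcd _ hlub]
  rw [tsum_eq_sum (s := Finset.range (Fintype.card ι))
    (by intro n hn; simp only [Finset.mem_range] at hn; simp [hc, hn, h0])]
  rw [Finset.sum_range fun n => μ (c n)]
  rw [← Equiv.sum_comp e.symm fun i => μ (a i)]
  refine Finset.sum_congr rfl fun i _ => ?_
  simp [hc, i.isLt]

/-- Monotonicity of the measure. -/
lemma meas_mono (h0 : μ ⊥ = 0)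
    (hμ : ∀ a : ℕ → A, (∀ i j, i ≠ j → a i ⊓ a j = ⊥) →
      ∀ s, IsLUB (Set.range a) s → μ s = ∑' n, μ (a n))
    {a b : A} (hab : a ≤ b) : μ a ≤ μ b := by
  classical
  have key : μ (Finset.univ.sup ![a, b \ a]) = μ a + μ (b \ a) := by
    rw [meas_sup_eq_sum h0 hμ]
    · simp [Fin.sum_univ_two]
    · intro i j hij
      fin_cases i <;> fin_cases j <;> simp_all [sdiff_eq] <;>
        [rw [inf_left_comm, inf_compl_eq_bot, inf_bot_eq];
         rw [inf_assoc, compl_inf_eq_bot, inf_bot_eq]]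
  have : Finset.univ.sup ![a, b \ a] = b := by
    have : Finset.univ.sup ![a, b \ a] = a ⊔ b \ a := by
      simp [Finset.sup_univ_eq_ciSup]
      rw [show (Finset.univ : Finset (Fin 2)) = {0, 1} by decide]
      simp
    rw [this, sup_sdiff_cancel' le_rfl hab]
  rw [this] at key
  rw [key]; exact le_self_add

end Meas


section Meas2

lemma sup_range_fin {α : Type*} [SemilatticeSup α] [OrderBot α] (f : ℕ → α) (n : ℕ) :
    (Finset.range n).sup f = Finset.univ.sup (fun i : Fin n => f i) := by
  apply le_antisymm
  · exact Finset.sup_le fun k hk =>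
      Finset.le_sup (f := fun i : Fin n => f i) (Finset.mem_univ (⟨k, Finset.mem_range.mp hk⟩ : Fin n))
  · exact Finset.sup_le fun i _ => Finset.le_sup (Finset.mem_range.mpr i.isLt)

variable {A : Type*} [BooleanAlgebra A] {μ : A → ℝ≥0∞}

lemma meas_iSup_of_monotone
    (h0 : μ ⊥ = 0)
    (hμ : ∀ a : ℕ → A, (∀ i j, i ≠ j → a i ⊓ a j = ⊥) →
      ∀ s, IsLUB (Set.range a) s → μ s = ∑' n, μ (a n))
    {b : ℕ → A} (hb : Monotone b) {s : A} (hs : IsLUB (Set.range b) s) :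
    μ s = ⨆ n, μ (b n) := by
  classical
  set e : ℕ → A := fun n => Nat.rec (b 0) (fun k _ => b (k+1) \ b k) n with he
  have he0 : e 0 = b 0 := rfl
  have heS : ∀ k, e (k+1) = b (k+1) \ b k := fun k => rfl
  have hle : ∀ n, e n ≤ b n := by
    intro n; cases n with
    | zero => exact le_rfl
    | succ k => rw [heS]; exact sdiff_le
  -- partial sups
  have hsup : ∀ n, (Finset.range (n+1)).sup e = b n := by
    intro n
    induction n with
    | zero =>
      simp [he0]
    | succ n ih =>
      rw [Finset.range_add_one, Finset.sup_insert, ih, heS, sup_comm,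
        sup_sdiff_cancel' le_rfl (hb (Nat.le_succ n))]
  have hed : ∀ i j, i ≠ j → e i ⊓ e j = ⊥ := by
    have key : ∀ i j, i < j → e i ⊓ e j = ⊥ := by
      intro i j hij
      obtain ⟨k, rfl⟩ : ∃ k, j = k + 1 := ⟨j - 1, by omega⟩
      have h1 : e i ≤ b k := le_trans (hle i) (hb (by omega))
      have h2 : e (k+1) ≤ (b k)ᶜ := by
        rw [heS, sdiff_eq]; exact inf_le_right
      refine le_bot_iff.mp (le_trans (inf_le_inf h1 h2) ?_)
      rw [inf_compl_eq_bot]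
    intro i j hij
    rcases lt_or_gt_of_ne hij with hlt | hgt
    · exact key i j hlt
    · rw [inf_comm]; exact key j i hgt
  have hlub : IsLUB (Set.range e) s := by
    constructor
    · rintro z ⟨n, rfl⟩
      exact le_trans (hle n) (hs.1 ⟨n, rfl⟩)
    · intro u hu
      refine hs.2 ?_
      rintro z ⟨n, rfl⟩
      rw [← hsup n]
      exact Finset.sup_le fun k _ => hu ⟨k, rfl⟩

  rw [hμ e hed s hlub, ENNReal.tsum_eq_iSup_nat]
  apply le_antisymm
  · refine iSup_le fun n => ?_
    cases n with
    | zero => simp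
    | succ k =>
      refine le_trans (le_of_eq ?_) (le_iSup _ k)
      rw [← hsup k, sup_range_fin,
        meas_sup_eq_sum h0 hμ (fun i : Fin (k+1) => e i)
          (fun i j hij => hed i j (by simpa [Fin.ext_iff] using hij))]
      rw [Finset.sum_range fun n => μ (e n)]
  · refine iSup_le fun n => ?_
    refine le_trans (le_of_eq ?_) (le_iSup _ (n+1))
    rw [← hsup n, sup_range_fin,
      meas_sup_eq_sum h0 hμ (fun i : Fin (n+1) => e i)
      (fun i j hij => hed i j (by simpa [Fin.ext_iff] using hij))]
    rw [Finset.sum_range fun k => μ (e k)]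

end Meas2


section ER

lemma exists_nnrat_btwn {a b : ℝ≥0∞} (h : a < b) :
    ∃ p : ℚ≥0, a < ((p : ℝ≥0) : ℝ≥0∞) ∧ ((p : ℝ≥0) : ℝ≥0∞) < b := by
  obtain ⟨q, hq0, haq, hqb⟩ := ENNReal.lt_iff_exists_rat_btwn.mp h
  have key : ((q.toNNRat : ℝ≥0) : ℝ) = ((q : ℝ).toNNReal : ℝ) := by
    rw [Real.coe_toNNReal _ (by exact_mod_cast hq0)]
    rw [show ((q.toNNRat : ℝ≥0) : ℝ) = ((q.toNNRat : ℚ) : ℝ) from by norm_cast]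
    rw [Rat.coe_toNNRat q hq0]
  have key2 : (q.toNNRat : ℝ≥0) = (q : ℝ).toNNReal := NNReal.coe_injective key
  exact ⟨q.toNNRat, by rw [key2]; exact ⟨haq, hqb⟩⟩

lemma exists_eps_lt {t v : ℝ≥0∞} (ht : t ≠ ∞) (h : t < v) :
    ∃ n : ℕ, t + 1 / ((n : ℝ≥0∞) + 1) < v := by
  by_cases hv : v = ∞
  · exact ⟨0, by simp [hv, ENNReal.add_lt_top, ht, lt_top_iff_ne_top]⟩
  · have h1 : v - t ≠ 0 := by
      simp only [ne_eq, tsub_eq_zero_iff_le, not_le]; exact h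
    obtain ⟨n, hn⟩ := ENNReal.exists_inv_nat_lt h1
    refine ⟨n, ?_⟩
    have h2 : 1 / ((n : ℝ≥0∞) + 1) < v - t := by
      refine lt_of_le_of_lt ?_ hn
      rw [one_div]
      refine ENNReal.inv_le_inv.mpr ?_
      exact le_self_add
    calc t + 1 / ((n : ℝ≥0∞) + 1) < t + (v - t) := ENNReal.add_lt_add_left ht h2
      _ = v := add_tsub_cancel_of_le h.le

lemma eps_antitone : Antitone (fun n : ℕ => 1 / ((n : ℝ≥0∞) + 1)) := by
  intro n m hnm
  simp only [one_div]
  exact ENNReal.inv_le_inv.mpr (add_le_add_left (by exact_mod_cast hnm) 1)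

lemma iSup_sub_eps {x : ℝ≥0∞} (hx : x ≠ ∞) :
    ⨆ k : ℕ, (x - (1 / ((k : ℝ≥0∞) + 1) + 1 / ((k : ℝ≥0∞) + 1))) = x := by
  apply le_antisymm
  · exact iSup_le fun k => tsub_le_self
  · refine ENNReal.le_of_forall_pos_le_add fun ε hε hlt => ?_
    obtain ⟨n, hn⟩ := exists_eps_lt (t := 0) (by simp) (by
      exact ENNReal.coe_pos.mpr (half_pos hε) : (0:ℝ≥0∞) < ((ε/2 : ℝ≥0) : ℝ≥0∞))
    rw [zero_add] at hn
    set δ : ℝ≥0∞ := 1 / ((n : ℝ≥0∞) + 1) with hδ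
    have hδε : δ + δ ≤ (ε : ℝ≥0∞) := by
      calc δ + δ ≤ ((ε/2 : ℝ≥0) : ℝ≥0∞) + ((ε/2 : ℝ≥0) : ℝ≥0∞) := add_le_add hn.le hn.le
        _ = ((ε : ℝ≥0) : ℝ≥0∞) := by
            rw [← ENNReal.coe_add]
            norm_cast
            exact add_halves ε
    calc x ≤ (x - (δ + δ)) + (δ + δ) := le_tsub_add
      _ ≤ (⨆ k : ℕ, (x - (1 / ((k : ℝ≥0∞) + 1) + 1 / ((k : ℝ≥0∞) + 1)))) + ε :=
          add_le_add (le_iSup (fun k : ℕ => (x - (1 / ((k : ℝ≥0∞) + 1) + 1 / ((k : ℝ≥0∞) + 1)))) n) hδε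

lemma mul_eq_iSup_min (y x : ℝ≥0∞) : y * x = ⨆ T : ℕ, y * min x T := by
  apply le_antisymm
  · by_cases hx : x = ∞
    · subst hx
      simp only [min_comm]
      rw [← ENNReal.mul_iSup]
      refine mul_le_mul_right ?_ y
      simp [iSup_eq_top]
      intro b hb
      obtain ⟨n, hn⟩ := ENNReal.exists_nat_gt hb.ne
      exact ⟨n, by simpa using hn⟩
    · obtain ⟨n, hn⟩ := ENNReal.exists_nat_gt hx
      refine le_trans (le_of_eq ?_) (le_iSup _ n)
      rw [min_eq_left hn.le]
  · exact iSup_le fun T => mul_le_mul_right (min_le_left _ _) y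

end ER

section PartGE
variable {A : Type*} [BooleanAlgebra A]


def trivData : SimpleData A :=
  ⟨1, fun _ => ⊤, fun _ => 0, fun i j hij => absurd (Subsingleton.elim i j) hij, by simp⟩

lemma trivData_below (f : NNMeasFun A) :
    ∀ t : ℝ≥0∞, f.toFun (Set.Iic t) ≤ (trivData (A := A)).toFun (Set.Iic t) := by
  intro t
  unfold SimpleData.toFun trivData
  simp only
  refine le_top.trans (Finset.le_sup (f := fun _ => (⊤ : A)) (b := (0 : Fin 1)) ?_)
  simp [Set.mem_Iic]

instance nonempty_below (f : NNMeasFun A) :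
    Nonempty {d : SimpleData A // ∀ t : ℝ≥0∞, f.toFun (Set.Iic t) ≤ d.toFun (Set.Iic t)} :=
  ⟨⟨trivData, trivData_below f⟩⟩

lemma pfIntegral_eq_subtype (μ : A → ℝ≥0∞) (f : NNMeasFun A) :
    pfIntegral μ f.toFun =
      ⨆ p : {d : SimpleData A // ∀ t : ℝ≥0∞, f.toFun (Set.Iic t) ≤ d.toFun (Set.Iic t)},
        ∑ i, μ (p.1.a i) * p.1.x i := by
  rw [pfIntegral, iSup_subtype']

lemma pfIntegral_add_le {A : Type*} [BooleanAlgebra A]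
    (μ : A → ℝ≥0∞) (h0 : μ ⊥ = 0)
    (hμ : ∀ a : ℕ → A, (∀ i j, i ≠ j → a i ⊓ a j = ⊥) →
      ∀ s, IsLUB (Set.range a) s → μ s = ∑' n, μ (a n))
    (f g h : NNMeasFun A)
    (hsum : ∀ t : ℝ≥0∞, ∃ c : ℕ → A,
      (∀ n : ℕ, IsLUB {z : A | ∃ q r : ℝ≥0∞,
          (q = ∞ ∨ ∃ p : ℚ≥0, q = ((p : ℝ≥0) : ℝ≥0∞)) ∧
          (r = ∞ ∨ ∃ p : ℚ≥0, r = ((p : ℝ≥0) : ℝ≥0∞)) ∧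
          q + r ≤ t + 1 / ((n : ℝ≥0∞) + 1) ∧
          z = f.toFun (Set.Iic q) ⊓ g.toFun (Set.Iic r)} (c n)) ∧
        IsGLB (Set.range c) (h.toFun (Set.Iic t))) :
    pfIntegral μ f.toFun + pfIntegral μ g.toFun ≤ pfIntegral μ h.toFun := by
  classical
  have key : ∀ d e : SimpleData A,
      (∀ t : ℝ≥0∞, f.toFun (Set.Iic t) ≤ d.toFun (Set.Iic t)) →
      (∀ t : ℝ≥0∞, g.toFun (Set.Iic t) ≤ e.toFun (Set.Iic t)) →
      (∑ i, μ (d.a i) * d.x i) + (∑ i, μ (e.a i) * e.x i) ≤ pfIntegral μ h.toFun := by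
    intro d e hd he
    set a' : Fin d.m × Fin e.m → A := fun p => d.a p.1 ⊓ e.a p.2 with ha'
    set x' : Fin d.m × Fin e.m → ℝ≥0∞ := fun p => d.x p.1 + e.x p.2 with hx'
    have hd' : ∀ p q, p ≠ q → a' p ⊓ a' q = ⊥ := by
      intro p q hpq
      by_cases h1 : p.1 = q.1
      · have h2 : p.2 ≠ q.2 := fun hc => hpq (Prod.ext h1 hc)
        refine le_bot_iff.mp (le_trans (inf_le_inf inf_le_right inf_le_right) ?_)
        rw [e.disjoint _ _ h2]
      · refine le_bot_iff.mp (le_trans (inf_le_inf inf_le_left inf_le_left) ?_)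
        rw [d.disjoint _ _ h1]
    have htop' : Finset.univ.sup a' = ⊤ := by
      rw [← Finset.univ_product_univ, ← Finset.sup_inf_sup, d.sup_eq_top, e.sup_eq_top,
        top_inf_eq]
    set P : SimpleData A := SimpleData.ofFintype a' x' hd' htop' with hP
    have hbelow : ∀ t : ℝ≥0∞, h.toFun (Set.Iic t) ≤ P.toFun (Set.Iic t) := by
      intro t
      rw [hP, SimpleData.toFun_ofFintype]
      by_cases ht : t = ∞
      · subst ht
        simp only [Set.mem_Iic, le_top, Finset.filter_true]
        rw [htop']
        exact le_top
      · obtain ⟨c, hc1, hc2⟩ := hsum t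
        -- choose a good n
        have hex : ∀ p : Fin d.m × Fin e.m, ∃ np : ℕ,
            t < x' p → t + 1 / ((np : ℝ≥0∞) + 1) < x' p := by
          intro p
          by_cases hv : t < x' p
          · obtain ⟨np, hnp⟩ := exists_eps_lt ht hv
            exact ⟨np, fun _ => hnp⟩
          · exact ⟨0, fun hc => absurd hc hv⟩
        choose np hnp using hex
        set n : ℕ := Finset.univ.sup np with hn
        have hgood : ∀ p : Fin d.m × Fin e.m, x' p ≤ t + 1 / ((n : ℝ≥0∞) + 1) → x' p ≤ t := by
          intro p hle
          by_contra hcon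
          have h1 : t < x' p := lt_of_not_ge hcon
          have h2 := hnp p h1
          have h3 : (1 : ℝ≥0∞) / ((n : ℝ≥0∞) + 1) ≤ 1 / ((np p : ℝ≥0∞) + 1) :=
            eps_antitone (Finset.le_sup (Finset.mem_univ p))
          exact absurd (hle.trans (add_le_add_right h3 t)) (not_le.mpr h2)
        refine le_trans (hc2.1 ⟨n, rfl⟩) ?_
        refine (hc1 n).2 ?_
        rintro z ⟨q, r, hq, hr, hqr, rfl⟩
        have h1 : f.toFun (Set.Iic q) ⊓ g.toFun (Set.Iic r) ≤
            d.toFun (Set.Iic q) ⊓ e.toFun (Set.Iic r) := inf_le_inf (hd q) (he r)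
        refine le_trans h1 ?_
        unfold SimpleData.toFun
        rw [Finset.sup_inf_sup]
        refine Finset.sup_le fun p hp => ?_
        rw [Finset.mem_product] at hp
        obtain ⟨hp1, hp2⟩ := hp
        simp only [Finset.mem_filter, Finset.mem_univ, true_and, Set.mem_Iic] at hp1 hp2
        have hxp : x' p ≤ t := by
          refine hgood p ?_
          calc x' p = d.x p.1 + e.x p.2 := rfl
            _ ≤ q + r := add_le_add hp1 hp2
            _ ≤ t + 1 / ((n : ℝ≥0∞) + 1) := hqr
        refine Finset.le_sup (f := a') ?_
        simp only [Finset.mem_filter, Finset.mem_univ, true_and, Set.mem_Iic]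
        exact hxp
    -- integral of product equals sum of integrals
    have hsum1 : ∀ i : Fin d.m, ∑ j : Fin e.m, μ (a' (i, j)) = μ (d.a i) := by
      intro i
      have hdisj : ∀ j k : Fin e.m, j ≠ k → (d.a i ⊓ e.a j) ⊓ (d.a i ⊓ e.a k) = ⊥ := by
        intro j k hjk
        refine le_bot_iff.mp (le_trans (inf_le_inf inf_le_right inf_le_right) ?_)
        rw [e.disjoint _ _ hjk]
      rw [← meas_sup_eq_sum h0 hμ (fun j => d.a i ⊓ e.a j) hdisj]
      congr 1
      rw [← Finset.sup_inf_distrib_left, e.sup_eq_top, inf_top_eq]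
    have hsum2 : ∀ j : Fin e.m, ∑ i : Fin d.m, μ (a' (i, j)) = μ (e.a j) := by
      intro j
      have hdisj : ∀ i k : Fin d.m, i ≠ k → (d.a i ⊓ e.a j) ⊓ (d.a k ⊓ e.a j) = ⊥ := by
        intro i k hik
        refine le_bot_iff.mp (le_trans (inf_le_inf inf_le_left inf_le_left) ?_)
        rw [d.disjoint _ _ hik]
      rw [← meas_sup_eq_sum h0 hμ (fun i => d.a i ⊓ e.a j) hdisj]
      congr 1
      rw [← Finset.sup_inf_distrib_right, d.sup_eq_top, top_inf_eq]
    have hint : (∑ i, μ (P.a i) * P.x i)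
        = (∑ i, μ (d.a i) * d.x i) + (∑ i, μ (e.a i) * e.x i) := by
      rw [hP, SimpleData.integral_ofFintype]
      rw [Fintype.sum_prod_type]
      have : ∀ i : Fin d.m, ∀ j : Fin e.m, μ (a' (i, j)) * x' (i, j)
          = μ (a' (i, j)) * d.x i + μ (a' (i, j)) * e.x j := fun i j => mul_add _ _ _
      simp_rw [this, Finset.sum_add_distrib]
      congr 1
      · refine Finset.sum_congr rfl fun i _ => ?_
        rw [← Finset.sum_mul, hsum1 i]
      · rw [Finset.sum_comm]
        refine Finset.sum_congr rfl fun j _ => ?_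
        rw [← Finset.sum_mul, hsum2 j]
    calc (∑ i, μ (d.a i) * d.x i) + (∑ i, μ (e.a i) * e.x i)
        = ∑ i, μ (P.a i) * P.x i := hint.symm
      _ ≤ pfIntegral μ h.toFun := by
          rw [pfIntegral]
          exact le_iSup₂_of_le P hbelow le_rfl
  rw [pfIntegral_eq_subtype μ f, pfIntegral_eq_subtype μ g]
  rw [ENNReal.iSup_add]
  refine iSup_le fun p => ?_
  rw [ENNReal.add_iSup]
  exact iSup_le fun q => key p.1 q.1 p.2 q.2

end PartGE

section PartLE
variable {A : Type*} [BooleanAlgebra A]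

lemma sup_inf_compl_eq (x y : A) : x ⊔ (y ⊓ xᶜ) = x ⊔ y := by
  apply le_antisymm
  · exact sup_le le_sup_left (inf_le_left.trans le_sup_right)
  · refine sup_le le_sup_left ?_
    calc y = (y ⊓ x) ⊔ (y ⊓ xᶜ) := by rw [← inf_sup_left, sup_compl_eq_top, inf_top_eq]
      _ ≤ x ⊔ (y ⊓ xᶜ) := sup_le_sup_right inf_le_right _

lemma SimpleData.below_ofFintype_iff {ι : Type*} [Fintype ι] (a : ι → A) (x : ι → ℝ≥0∞)
    (hd : ∀ i j, i ≠ j → a i ⊓ a j = ⊥) (htop : Finset.univ.sup a = ⊤) (f : NNMeasFun A) :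
    (∀ t : ℝ≥0∞, f.toFun (Set.Iic t) ≤ (SimpleData.ofFintype a x hd htop).toFun (Set.Iic t)) ↔
      ∀ (w : ι) (t : ℝ≥0∞), t < x w → a w ≤ (f.toFun (Set.Iic t))ᶜ := by
  rw [SimpleData.below_iff]
  constructor
  · intro H w t ht
    have h1 := H (Fintype.equivFin ι w) t (by
      show t < (x ∘ (Fintype.equivFin ι).symm) (Fintype.equivFin ι w)
      simpa using ht)
    simpa [SimpleData.ofFintype] using h1
  · intro H i t ht
    exact H _ t ht

set_option maxHeartbeats 2000000 in
/-- The key truncated estimate for the hard direction. -/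
lemma key_trunc
    (μ : A → ℝ≥0∞) (h0 : μ ⊥ = 0)
    (hμ : ∀ a : ℕ → A, (∀ i j, i ≠ j → a i ⊓ a j = ⊥) →
      ∀ s, IsLUB (Set.range a) s → μ s = ∑' n, μ (a n))
    (f g h : NNMeasFun A)
    (hsum : ∀ t : ℝ≥0∞, ∃ c : ℕ → A,
      (∀ n : ℕ, IsLUB {z : A | ∃ q r : ℝ≥0∞,
          (q = ∞ ∨ ∃ p : ℚ≥0, q = ((p : ℝ≥0) : ℝ≥0∞)) ∧
          (r = ∞ ∨ ∃ p : ℚ≥0, r = ((p : ℝ≥0) : ℝ≥0∞)) ∧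
          q + r ≤ t + 1 / ((n : ℝ≥0∞) + 1) ∧
          z = f.toFun (Set.Iic q) ⊓ g.toFun (Set.Iic r)} (c n)) ∧
        IsGLB (Set.range c) (h.toFun (Set.Iic t)))
    (Tn : ℕ) (d : SimpleData A)
    (hd : ∀ t : ℝ≥0∞, h.toFun (Set.Iic t) ≤ d.toFun (Set.Iic t))
    (hbd : ∀ i, d.x i ≤ (Tn : ℝ≥0∞)) :
    ∑ i, μ (d.a i) * d.x i ≤ pfIntegral μ f.toFun + pfIntegral μ g.toFun := by
  classical
  have hd' : ∀ i t, t < d.x i → d.a i ≤ (h.toFun (Set.Iic t))ᶜ :=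
    (d.below_iff h).mp hd
  -- reduce to fixed k (grid resolution)
  have main : ∀ k : ℕ,
      ∑ i, μ (d.a i) * (d.x i - (1 / ((k : ℝ≥0∞) + 1) + 1 / ((k : ℝ≥0∞) + 1)))
        ≤ pfIntegral μ f.toFun + pfIntegral μ g.toFun := by
    intro k
    set δ : ℝ≥0∞ := 1 / ((k : ℝ≥0∞) + 1) with hδdef
    -- per-piece data from hsum
    set ti : Fin d.m → ℝ≥0∞ := fun i => d.x i - δ with hti
    choose ci hci1 hci2 using fun i => hsum (ti i)
    have hδ0 : δ ≠ 0 := by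
      rw [hδdef, one_div]
      exact ENNReal.inv_ne_zero.mpr
        (ENNReal.add_ne_top.mpr ⟨ENNReal.natCast_ne_top k, ENNReal.one_ne_top⟩)
    have hδtop : δ ≠ ∞ := by
      rw [hδdef, one_div]
      simp
    have hti_lt : ∀ i, d.x i ≠ 0 → ti i < d.x i := by
      intro i hxi
      refine ENNReal.sub_lt_self ?_ hxi hδ0
      exact ne_top_of_le_ne_top (ENNReal.natCast_ne_top Tn) (hbd i)
    have hci_anti : ∀ i, Antitone (ci i) := by
      intro i nn mm hnm
      refine (hci1 i mm).2 fun z hz => (hci1 i nn).1 ?_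
      obtain ⟨q, r, hq, hr, hqr, rfl⟩ := hz
      exact ⟨q, r, hq, hr, hqr.trans (add_le_add_right (eps_antitone hnm) _), rfl⟩
    set bb : ℕ → Fin d.m → A :=
      fun nn i => if d.x i = 0 then ⊥ else d.a i ⊓ (ci i nn)ᶜ with hbb
    have hba : ∀ nn i, bb nn i ≤ d.a i := by
      intro nn i
      rw [hbb]; dsimp only
      split
      · exact bot_le
      · exact inf_le_left
    have hbmono : ∀ i, Monotone fun nn => bb nn i := by
      intro i nn mm hnm
      rw [hbb]; dsimp only
      split
      · exact le_rfl
      · exact inf_le_inf_left _ (compl_le_compl (hci_anti i hnm))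
    have hblub : ∀ i, IsLUB (Set.range fun nn => bb nn i)
        (if d.x i = 0 then ⊥ else d.a i) := by
      intro i
      rw [hbb]; dsimp only
      by_cases hxi : d.x i = 0
      · simp only [hxi, if_true, if_pos]
        simp only [Set.range_const]
        exact isLUB_singleton
      · simp only [hxi, if_neg, if_false]
        have h1 : IsLUB (Set.range fun nn => (ci i nn)ᶜ) (h.toFun (Set.Iic (ti i)))ᶜ :=
          isLUB_compl_of_isGLB (hci2 i)
        have h2 := isLUB_inf_of_isLUB (d.a i) h1
        have h3 : d.a i ⊓ (h.toFun (Set.Iic (ti i)))ᶜ = d.a i :=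
          inf_eq_left.mpr (hd' i (ti i) (hti_lt i hxi))
        rwa [h3] at h2
    have hmeas_lim : ∀ i, (⨆ nn, μ (bb nn i)) = μ (if d.x i = 0 then ⊥ else d.a i) :=
      fun i => (meas_iSup_of_monotone h0 hμ (hbmono i) (hblub i)).symm
    -- innermost estimate, per n
    have innermost : ∀ nn : ℕ,
        ∑ i, μ (bb nn i) * (d.x i - (δ + δ))
          ≤ pfIntegral μ f.toFun + pfIntegral μ g.toFun := by
      intro nn
      set ε : ℝ≥0∞ := 1 / ((nn : ℝ≥0∞) + 1) with hεdef
      set β : Fin d.m → ℝ≥0∞ := fun i => ti i + ε with hβ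
      set N : ℕ := (k + 1) * (Tn + 2) with hN
      set Qq : ℕ → ℚ≥0 := fun s => (s : ℚ≥0) / ((k : ℚ≥0) + 1) with hQq
      set Q : ℕ → ℝ≥0∞ := fun s => ((Qq s : ℝ≥0) : ℝ≥0∞) with hQ
      have hQ0 : Q 0 = 0 := by simp [hQ, hQq]
      have hk1 : ((k : ℚ≥0) + 1) ≠ 0 := by positivity
      have hQδ : ∀ s, Q (s + 1) = Q s + δ := by
        intro s
        have hr : Qq (s + 1) = Qq s + 1 / ((k : ℚ≥0) + 1) := by
          rw [hQq]; dsimp only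
          rw [← add_div]
          push_cast
          ring_nf
        have hc : (((1 / ((k : ℚ≥0) + 1) : ℚ≥0) : ℝ≥0) : ℝ≥0∞) = δ := by
          rw [hδdef]
          push_cast
          rw [one_div, one_div, ENNReal.coe_inv (by positivity)]
          push_cast
          ring_nf
        rw [hQ]; dsimp only
        rw [hr]
        push_cast [ENNReal.coe_add]
        rw [← hc]
        push_cast
        ring
      have hQqmono : Monotone Qq := by
        intro s s' hss
        rw [hQq]; dsimp only
        gcongr

      have hQmono : Monotone Q := by
        intro s s' hss
        rw [hQ]; dsimp only
        exact_mod_cast hQqmono hss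
      have hQN : Q N = (Tn : ℝ≥0∞) + 2 := by
        have hq : Qq N = (Tn : ℚ≥0) + 2 := by
          rw [hQq, hN]; dsimp only
          push_cast
          exact mul_div_cancel_left₀ _ hk1
        rw [hQ]; dsimp only
        rw [hq]
        push_cast
        ring
      have hβle : ∀ i, β i ≤ Q N := by
        intro i
        rw [hQN, hβ]; dsimp only
        have h1 : ti i ≤ (Tn : ℝ≥0∞) := le_trans tsub_le_self (hbd i)
        have h2 : ε ≤ 1 := by
          rw [hεdef, one_div]
          exact ENNReal.inv_le_one.mpr le_add_self
        calc ti i + ε ≤ (Tn : ℝ≥0∞) + 1 := add_le_add h1 h2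
          _ ≤ (Tn : ℝ≥0∞) + 2 := by gcongr <;> norm_num
      -- the ladder
      set F' : ℕ → A := fun j =>
        if j = 0 then ⊥ else if j ≤ N + 1 then f.toFun (Set.Iic (Q (j - 1))) else ⊤ with hF'
      have hF'mono : Monotone F' := by
        refine monotone_nat_of_le_succ fun j => ?_
        rw [hF']; dsimp only
        rcases Nat.eq_zero_or_pos j with hj | hj
        · subst hj; simp
        · have hj0 : j ≠ 0 := hj.ne'
          simp only [hj0, if_false, Nat.succ_ne_zero]
          by_cases hj1 : j + 1 ≤ N + 1
          · have hj2 : j ≤ N + 1 := by omega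
            simp only [hj1, hj2, if_true]
            exact f.iic_mono (hQmono (by omega))
          · by_cases hj2 : j ≤ N + 1 <;> simp [hj1, hj2]
      have hF'0 : F' 0 = ⊥ := by simp [hF']
      have hF'top : F' (N + 2) = ⊤ := by simp [hF']
      have hF'mid : ∀ j, 1 ≤ j → j ≤ N + 1 → F' j = f.toFun (Set.Iic (Q (j - 1))) := by
        intro j h1 h2
        have hj0 : j ≠ 0 := by omega
        rw [hF']; dsimp only
        rw [if_neg hj0, if_pos h2]
      -- pieces
      set PP : Fin d.m × Fin (N + 2) → A :=
        fun p => bb nn p.1 ⊓ F' (p.2.val + 1) ⊓ (F' p.2.val)ᶜ with hPP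
      set X : A := Finset.univ.sup PP with hX
      set Pc : Option (Fin d.m × Fin (N + 2)) → A :=
        fun w => Option.elim w Xᶜ PP with hPc
      set fv : Option (Fin d.m × Fin (N + 2)) → ℝ≥0∞ :=
        fun w => Option.elim w 0 (fun p => Q p.2.val - δ) with hfv
      set gv : Option (Fin d.m × Fin (N + 2)) → ℝ≥0∞ :=
        fun w => Option.elim w 0 (fun p => β p.1 - Q p.2.val) with hgv
      have hPPle : ∀ p, PP p ≤ bb nn p.1 := fun p => le_trans inf_le_left inf_le_left
      have hPPdisj : ∀ p q : Fin d.m × Fin (N + 2), p ≠ q → PP p ⊓ PP q = ⊥ := by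
        have key2 : ∀ p q : Fin d.m × Fin (N + 2), p.1 = q.1 → p.2.val < q.2.val →
            PP p ⊓ PP q = ⊥ := by
          intro p q h1 h2
          have ha : PP p ≤ F' (p.2.val + 1) := le_trans inf_le_left inf_le_right
          have hb' : PP q ≤ (F' q.2.val)ᶜ := inf_le_right
          have hc : F' (p.2.val + 1) ≤ F' q.2.val := hF'mono (by omega)
          refine le_bot_iff.mp (le_trans (inf_le_inf (ha.trans hc) hb') ?_)
          rw [inf_compl_eq_bot]
        intro p q hpq
        by_cases h1 : p.1 = q.1
        · have h2 : p.2 ≠ q.2 := fun hc => hpq (Prod.ext h1 hc)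
          rcases lt_or_gt_of_ne (fun hc => h2 (Fin.ext hc) : p.2.val ≠ q.2.val) with hlt | hgt
          · exact key2 p q h1 hlt
          · rw [inf_comm]; exact key2 q p h1.symm hgt
        · refine le_bot_iff.mp
            (le_trans (inf_le_inf ((hPPle p).trans (hba nn p.1)) ((hPPle q).trans (hba nn q.1))) ?_)
          rw [d.disjoint _ _ h1]
      have hPcdisj : ∀ w w', w ≠ w' → Pc w ⊓ Pc w' = ⊥ := by
        intro w w' hww
        match w, w' with
        | none, none => exact absurd rfl hww
        | none, some q =>
          rw [hPc]; dsimp only [Option.elim]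
          rw [inf_comm]
          refine le_bot_iff.mp (le_trans (inf_le_inf (Finset.le_sup (Finset.mem_univ q)) le_rfl) ?_)
          rw [← hX, inf_compl_eq_bot]
        | some p, none =>
          rw [hPc]; dsimp only [Option.elim]
          refine le_bot_iff.mp (le_trans (inf_le_inf (Finset.le_sup (Finset.mem_univ p)) le_rfl) ?_)
          rw [← hX, inf_compl_eq_bot]
        | some p, some q =>
          have hpq : p ≠ q := fun hc => hww (by rw [hc])
          rw [hPc]; dsimp only [Option.elim]
          exact hPPdisj p q hpq
      have hPctop : Finset.univ.sup Pc = ⊤ := by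
        apply le_antisymm le_top
        have h1 : X ≤ Finset.univ.sup Pc := by
          rw [hX]
          exact Finset.sup_le fun p _ =>
            le_trans (le_of_eq rfl) (Finset.le_sup (f := Pc) (Finset.mem_univ (some p)))
        have h2 : Xᶜ ≤ Finset.univ.sup Pc := Finset.le_sup (f := Pc) (Finset.mem_univ none)
        calc ⊤ = X ⊔ Xᶜ := (sup_compl_eq_top).symm
          _ ≤ _ := sup_le h1 h2
      -- the two simple functions
      set ef : SimpleData A := SimpleData.ofFintype Pc fv hPcdisj hPctop with hef
      set eg : SimpleData A := SimpleData.ofFintype Pc gv hPcdisj hPctop with heg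
      have hbelowf : ∀ t : ℝ≥0∞, f.toFun (Set.Iic t) ≤ ef.toFun (Set.Iic t) := by
        rw [hef, SimpleData.below_ofFintype_iff]
        rintro (_ | p) t ht
        · rw [hfv] at ht; simp at ht
        · rw [hfv] at ht; dsimp only [Option.elim] at ht
          rcases Nat.eq_zero_or_pos p.2.val with hj | hj
          · rw [hj, hQ0] at ht
            exact absurd ht (not_lt.mpr (by simp))
          · have hQj : Q p.2.val - δ = Q (p.2.val - 1) := by
              conv_lhs => rw [show p.2.val = (p.2.val - 1) + 1 by omega]
              rw [hQδ, ENNReal.add_sub_cancel_right hδtop]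
            have h1 : Pc (some p) ≤ (F' p.2.val)ᶜ := inf_le_right
            have h2 : F' p.2.val = f.toFun (Set.Iic (Q (p.2.val - 1))) :=
              hF'mid _ hj (by omega)
            refine le_trans h1 ?_
            rw [h2]
            refine compl_le_compl (f.iic_mono ?_)
            rw [hQj] at ht
            exact ht.le
      have hbelowg : ∀ t : ℝ≥0∞, g.toFun (Set.Iic t) ≤ eg.toFun (Set.Iic t) := by
        rw [heg, SimpleData.below_ofFintype_iff]
        rintro (_ | p) t ht
        · rw [hgv] at ht; simp at ht
        · rw [hgv] at ht; dsimp only [Option.elim] at ht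
          by_cases hxi : d.x p.1 = 0
          · have : Pc (some p) = ⊥ := by
              rw [hPc]; dsimp only [Option.elim]
              rw [hPP]; dsimp only
              rw [hbb]; dsimp only
              rw [if_pos hxi, bot_inf_eq, bot_inf_eq]
            rw [this]; exact bot_le
          · by_cases hjN : p.2.val ≤ N
            · obtain ⟨pr, hpr1, hpr2⟩ := exists_nnrat_btwn ht
              have hmem : f.toFun (Set.Iic (Q p.2.val)) ⊓ g.toFun (Set.Iic ((pr : ℝ≥0) : ℝ≥0∞))
                  ≤ ci p.1 nn := by
                refine (hci1 p.1 nn).1 ?_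
                refine ⟨Q p.2.val, ((pr : ℝ≥0) : ℝ≥0∞), Or.inr ⟨Qq p.2.val, rfl⟩,
                  Or.inr ⟨pr, rfl⟩, ?_, rfl⟩
                have := lt_tsub_iff_left.mp hpr2
                exact this.le
              have hPF : Pc (some p) ≤ bb nn p.1 ⊓ f.toFun (Set.Iic (Q p.2.val)) := by
                rw [hPc]; dsimp only [Option.elim]
                rw [hPP]; dsimp only
                refine le_inf (le_trans inf_le_left inf_le_left) ?_
                refine le_trans inf_le_left (le_trans inf_le_right ?_)
                rw [hF'mid (p.2.val + 1) (by omega) (by omega)]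
                simp only [Nat.add_sub_cancel]
                exact le_rfl
              have hkill : Pc (some p) ⊓ g.toFun (Set.Iic ((pr : ℝ≥0) : ℝ≥0∞)) = ⊥ := by
                have h1 : bb nn p.1 ≤ (ci p.1 nn)ᶜ := by
                  rw [hbb]; dsimp only
                  rw [if_neg hxi]
                  exact inf_le_right
                refine le_bot_iff.mp ?_
                calc Pc (some p) ⊓ g.toFun (Set.Iic ((pr : ℝ≥0) : ℝ≥0∞))
                    ≤ (bb nn p.1 ⊓ f.toFun (Set.Iic (Q p.2.val))) ⊓ g.toFun (Set.Iic ((pr : ℝ≥0) : ℝ≥0∞)) :=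
                      inf_le_inf_right _ hPF
                  _ ≤ (ci p.1 nn)ᶜ ⊓ ci p.1 nn := by
                      rw [inf_assoc]
                      exact inf_le_inf h1 hmem
                  _ = ⊥ := compl_inf_eq_bot
              have h2 : Pc (some p) ≤ (g.toFun (Set.Iic ((pr : ℝ≥0) : ℝ≥0∞)))ᶜ :=
                le_compl_iff_disjoint_right.mpr (disjoint_iff.mpr hkill)
              refine le_trans h2 (compl_le_compl (g.iic_mono hpr1.le))
            · -- j = N+1 : gv = 0, contradiction
              exfalso
              have hj : p.2.val = N + 1 := by omega
              have : β p.1 - Q p.2.val = 0 := by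
                rw [tsub_eq_zero_of_le]
                rw [hj]
                exact (hβle p.1).trans (hQmono (by omega))
              rw [this] at ht
              simp at ht
      -- value estimate
      have hval : ∀ p : Fin d.m × Fin (N + 2),
          d.x p.1 - (δ + δ) ≤ (Q p.2.val - δ) + (β p.1 - Q p.2.val) := by
        intro p
        have step1 : β p.1 - δ ≤ (Q p.2.val - δ) + (β p.1 - Q p.2.val) := by
          rw [tsub_le_iff_right]
          calc β p.1 ≤ (β p.1 - Q p.2.val) + Q p.2.val := le_tsub_add
            _ ≤ (β p.1 - Q p.2.val) + ((Q p.2.val - δ) + δ) :=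
                add_le_add_right le_tsub_add _
            _ = (Q p.2.val - δ) + (β p.1 - Q p.2.val) + δ := by ring
        refine le_trans ?_ step1
        have h1 : ti p.1 - δ ≤ β p.1 - δ :=
          tsub_le_tsub_right (le_add_right le_rfl) δ
        refine le_trans (le_of_eq ?_) h1
        rw [hti]; dsimp only
        rw [tsub_tsub]
      -- telescoping partition of bb nn i
      have htele : ∀ i : Fin d.m,
          Finset.univ.sup (fun j : Fin (N + 2) => PP (i, j)) = bb nn i := by
        intro i
        have tele : ∀ J : ℕ, (Finset.range (J + 1)).sup
            (fun j => bb nn i ⊓ F' (j + 1) ⊓ (F' j)ᶜ) = bb nn i ⊓ F' (J + 1) := by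
          intro J
          induction J with
          | zero => simp [hF'0]
          | succ J ih =>
            rw [Finset.range_add_one, Finset.sup_insert, ih]
            rw [inf_assoc, ← inf_sup_left]
            congr 1
            rw [sup_comm, sup_inf_compl_eq]
            exact sup_eq_right.mpr (hF'mono (by omega))
        have h1 : Finset.univ.sup (fun j : Fin (N + 2) => PP (i, j))
            = (Finset.range (N + 2)).sup (fun j => bb nn i ⊓ F' (j + 1) ⊓ (F' j)ᶜ) := by
          rw [sup_range_fin]
        rw [h1, show N + 2 = (N + 1) + 1 from rfl, tele (N + 1), hF'top, inf_top_eq]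
      have hμtele : ∀ i : Fin d.m,
          ∑ j : Fin (N + 2), μ (PP (i, j)) = μ (bb nn i) := by
        intro i
        rw [← meas_sup_eq_sum h0 hμ (fun j : Fin (N + 2) => PP (i, j))
          (fun j j' hjj => hPPdisj (i, j) (i, j') (fun hc => hjj (congrArg Prod.snd hc)))]
        rw [htele i]
      -- put it together
      have hint : (∑ i, μ (ef.a i) * ef.x i) + (∑ i, μ (eg.a i) * eg.x i)
          = ∑ w : Option (Fin d.m × Fin (N + 2)), μ (Pc w) * (fv w + gv w) := by
        rw [hef, heg, SimpleData.integral_ofFintype, SimpleData.integral_ofFintype]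
        rw [← Finset.sum_add_distrib]
        refine Finset.sum_congr rfl fun w _ => (mul_add (μ (Pc w)) (fv w) (gv w)).symm
      have hfinal : ∑ i, μ (bb nn i) * (d.x i - (δ + δ))
          ≤ (∑ i, μ (ef.a i) * ef.x i) + (∑ i, μ (eg.a i) * eg.x i) := by
        rw [hint]
        rw [Fintype.sum_option]
        refine le_add_of_nonneg_of_le zero_le' ?_
        rw [Fintype.sum_prod_type]
        have step : ∀ i : Fin d.m, μ (bb nn i) * (d.x i - (δ + δ))
            ≤ ∑ j : Fin (N + 2), μ (Pc (some (i, j))) * (fv (some (i, j)) + gv (some (i, j))) := by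
          intro i
          calc μ (bb nn i) * (d.x i - (δ + δ))
              = (∑ j : Fin (N + 2), μ (PP (i, j))) * (d.x i - (δ + δ)) := by rw [hμtele i]
            _ = ∑ j : Fin (N + 2), μ (PP (i, j)) * (d.x i - (δ + δ)) := Finset.sum_mul _ _ _
            _ ≤ ∑ j : Fin (N + 2), μ (Pc (some (i, j))) * (fv (some (i, j)) + gv (some (i, j))) := by
                refine Finset.sum_le_sum fun j _ => ?_
                have h1 : Pc (some (i, j)) = PP (i, j) := rfl
                rw [h1]
                refine mul_le_mul_right ?_ _
                have := hval (i, j)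
                refine this.trans (le_of_eq ?_)
                rw [hfv, hgv]
                simp only [Option.elim_some]
            _ = _ := rfl
        exact Finset.sum_le_sum fun i _ => step i
      refine hfinal.trans ?_
      refine add_le_add ?_ ?_
      · rw [pfIntegral]
        exact le_iSup₂_of_le ef hbelowf le_rfl
      · rw [pfIntegral]
        exact le_iSup₂_of_le eg hbelowg le_rfl
    -- take sup over nn
    have hterm : ∀ i, μ (d.a i) * (d.x i - (δ + δ))
        = ⨆ nn, μ (bb nn i) * (d.x i - (δ + δ)) := by
      intro i
      by_cases hxi : d.x i = 0
      · simp [hxi, zero_tsub]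
      · rw [← ENNReal.iSup_mul, hmeas_lim i, if_neg hxi]
    calc ∑ i, μ (d.a i) * (d.x i - (δ + δ))
        = ∑ i, ⨆ nn, μ (bb nn i) * (d.x i - (δ + δ)) :=
          Finset.sum_congr rfl fun i _ => hterm i
      _ = ⨆ nn, ∑ i, μ (bb nn i) * (d.x i - (δ + δ)) :=
          ENNReal.finsetSum_iSup_of_monotone fun i nnn mmm hnm =>
            mul_le_mul_left (meas_mono h0 hμ (hbmono i hnm)) _
      _ ≤ _ := iSup_le innermost
  -- conclude: take sup over k
  have hterm2 : ∀ i, μ (d.a i) * d.x i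
      = ⨆ k : ℕ, μ (d.a i) * (d.x i - (1 / ((k : ℝ≥0∞) + 1) + 1 / ((k : ℝ≥0∞) + 1))) := by
    intro i
    have hx : d.x i ≠ ∞ := ne_top_of_le_ne_top (ENNReal.natCast_ne_top Tn) (hbd i)
    have h1 := congrArg (fun z => μ (d.a i) * z) (iSup_sub_eps hx).symm
    try dsimp only at h1
    rw [ENNReal.mul_iSup] at h1
    exact h1
  calc ∑ i, μ (d.a i) * d.x i
      = ∑ i, ⨆ k : ℕ, μ (d.a i) * (d.x i - (1 / ((k : ℝ≥0∞) + 1) + 1 / ((k : ℝ≥0∞) + 1))) :=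
        Finset.sum_congr rfl fun i _ => hterm2 i
    _ = ⨆ k : ℕ, ∑ i, μ (d.a i) * (d.x i - (1 / ((k : ℝ≥0∞) + 1) + 1 / ((k : ℝ≥0∞) + 1))) :=
        ENNReal.finsetSum_iSup_of_monotone fun i kk kk' hkk =>
          mul_le_mul_right (tsub_le_tsub_left (add_le_add (eps_antitone hkk) (eps_antitone hkk)) _) _
    _ ≤ _ := iSup_le main

end PartLE

section Final
variable {A : Type*} [BooleanAlgebra A]

lemma pfIntegral_le_sum
    (μ : A → ℝ≥0∞) (h0 : μ ⊥ = 0)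
    (hμ : ∀ a : ℕ → A, (∀ i j, i ≠ j → a i ⊓ a j = ⊥) →
      ∀ s, IsLUB (Set.range a) s → μ s = ∑' n, μ (a n))
    (f g h : NNMeasFun A)
    (hsum : ∀ t : ℝ≥0∞, ∃ c : ℕ → A,
      (∀ n : ℕ, IsLUB {z : A | ∃ q r : ℝ≥0∞,
          (q = ∞ ∨ ∃ p : ℚ≥0, q = ((p : ℝ≥0) : ℝ≥0∞)) ∧
          (r = ∞ ∨ ∃ p : ℚ≥0, r = ((p : ℝ≥0) : ℝ≥0∞)) ∧
          q + r ≤ t + 1 / ((n : ℝ≥0∞) + 1) ∧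
          z = f.toFun (Set.Iic q) ⊓ g.toFun (Set.Iic r)} (c n)) ∧
        IsGLB (Set.range c) (h.toFun (Set.Iic t))) :
    pfIntegral μ h.toFun ≤ pfIntegral μ f.toFun + pfIntegral μ g.toFun := by
  rw [pfIntegral]
  refine iSup_le fun d => iSup_le fun hd => ?_
  have htr : ∀ T : ℕ, ∑ i, μ (d.a i) * min (d.x i) (T : ℝ≥0∞)
      ≤ pfIntegral μ f.toFun + pfIntegral μ g.toFun := by
    intro T
    set dT : SimpleData A :=
      ⟨d.m, d.a, fun i => min (d.x i) (T : ℝ≥0∞), d.disjoint, d.sup_eq_top⟩ with hdT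
    have hbel : ∀ t : ℝ≥0∞, h.toFun (Set.Iic t) ≤ dT.toFun (Set.Iic t) := by
      refine (dT.below_iff h).mpr ?_
      intro i t ht
      exact (d.below_iff h).mp hd i t (lt_of_lt_of_le ht (min_le_left _ _))
    exact key_trunc μ h0 hμ f g h hsum T dT hbel (fun i => min_le_right _ _)
  calc ∑ i, μ (d.a i) * d.x i
      = ∑ i, ⨆ T : ℕ, μ (d.a i) * min (d.x i) (T : ℝ≥0∞) :=
        Finset.sum_congr rfl fun i _ => mul_eq_iSup_min _ _
    _ = ⨆ T : ℕ, ∑ i, μ (d.a i) * min (d.x i) (T : ℝ≥0∞) :=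
        ENNReal.finsetSum_iSup_of_monotone fun i T T' hTT =>
          mul_le_mul_right (min_le_min le_rfl (by exact_mod_cast hTT)) _
    _ ≤ _ := iSup_le htr

end Final
end Aux

/-- Additivity of the point-free integral: if `h = f + g` in the point-free
sense, then `∫ h dμ = ∫ f dμ + ∫ g dμ`. -/
theorem pfIntegral_add {A : Type*} [BooleanAlgebra A]
    (hA : ∀ a : ℕ → A, ∃ s, IsLUB (Set.range a) s)
    (μ : A → ℝ≥0∞) (h0 : μ ⊥ = 0)
    (hμ : ∀ a : ℕ → A, (∀ i j, i ≠ j → a i ⊓ a j = ⊥) →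
      ∀ s, IsLUB (Set.range a) s → μ s = ∑' n, μ (a n))
    (f g h : NNMeasFun A)
    (hsum : ∀ t : ℝ≥0∞, ∃ c : ℕ → A,
      (∀ n : ℕ, IsLUB {z : A | ∃ q r : ℝ≥0∞,
          (q = ∞ ∨ ∃ p : ℚ≥0, q = ((p : ℝ≥0) : ℝ≥0∞)) ∧
          (r = ∞ ∨ ∃ p : ℚ≥0, r = ((p : ℝ≥0) : ℝ≥0∞)) ∧
          q + r ≤ t + 1 / ((n : ℝ≥0∞) + 1) ∧
          z = f.toFun (Set.Iic q) ⊓ g.toFun (Set.Iic r)} (c n)) ∧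
        IsGLB (Set.range c) (h.toFun (Set.Iic t))) :
    pfIntegral μ h.toFun = pfIntegral μ f.toFun + pfIntegral μ g.toFun :=
  le_antisymm (pfIntegral_le_sum μ h0 hμ f g h hsum)
    (pfIntegral_add_le μ h0 hμ f g h hsum)
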